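/- Let $\{V_n\}$ be a consistent sequence and $\{C_n \subseteq V_n\}$ a sequence of convex sets. If $\{C_n\}$ is projection-compatible ($\mathcal{P}_{V_n} C_{n+1} = C_n$), then the sequence of support functions $h_{C_n}(x) = \sup_{x' \in C_n} \langle x', x \rangle$ is intersection-compatible: $h_{C_{n+1}}|_{V_n} = h_{C_n}$. Conversely, if $\{C_n\}$ is intersection-compatible and each $C_n$ is compact, then $\{h_{C_n}\}$ is projection-compatible: $\inf\{h_{C_{n+1}}(x') : \mathcal{P}_{V_n}(x') = x\} = h_{C_n}(x)$ for all $x \in V_n$. -/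

import Mathlib

noncomputable section

set_option maxHeartbeats 1000000

/-- The extended-real-valued support function of a set `C`:
`h_C (x) = sup_{x' ∈ C} ⟪x', x⟫` (with `sup ∅ = ⊥`). -/
def suppFn {H : Type*} [NormedAddCommGroup H] [InnerProductSpace ℝ H]
    (C : Set H) (x : H) : EReal :=
  sSup (Real.toEReal '' {r : ℝ | ∃ x' ∈ C, r = inner (𝕜 := ℝ) x' x})

section Aux

variable {H : Type*} [NormedAddCommGroup H] [InnerProductSpace ℝ H]

lemma aux_le_suppFn {C : Set H} {x c : H} (hc : c ∈ C) :
    ((inner (𝕜 := ℝ) c x : ℝ) : EReal) ≤ suppFn C x :=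
  le_sSup ⟨_, ⟨c, hc, rfl⟩, rfl⟩

lemma aux_suppFn_le {C : Set H} {x : H} {b : ℝ} (h : ∀ c ∈ C, inner (𝕜 := ℝ) c x ≤ b) :
    suppFn C x ≤ (b : EReal) := by
  refine sSup_le ?_
  rintro r ⟨s, ⟨c, hc, rfl⟩, rfl⟩
  exact EReal.coe_le_coe_iff.2 (h c hc)

lemma aux_inner_proj (Vn : Submodule ℝ H) [Vn.HasOrthogonalProjection] {c : H}
    (hc : c ∈ Vn) (z : H) :
    inner (𝕜 := ℝ) c z = inner (𝕜 := ℝ) c ((Submodule.orthogonalProjectionOnto Vn z : H)) := by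
  have h := Submodule.sub_starProjection_mem_orthogonal (K := Vn) z
  have h2 : inner (𝕜 := ℝ) c (z - (Submodule.orthogonalProjectionOnto Vn z : H)) = 0 :=
    (Submodule.mem_orthogonal Vn _).1 h c hc
  rw [inner_sub_right] at h2
  linarith

variable [FiniteDimensional ℝ H]

/-- Key separation lemma, nonempty case. -/
lemma aux_key (Vn : Submodule ℝ H) (K : Set H) (hKcomp : IsCompact K)
    (hKconv : Convex ℝ K) (x : H) (hx : x ∈ Vn) {c0 : H} (hc0K : c0 ∈ K) (hc0V : c0 ∈ Vn)
    (α β : ℝ) (hα : ∀ c ∈ K, c ∈ Vn → inner (𝕜 := ℝ) c x ≤ α) (hβ : α < β) :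
    ∃ x' : H, (Submodule.orthogonalProjectionOnto Vn x' : H) = x ∧
      ∀ c ∈ K, inner (𝕜 := ℝ) c x' ≤ β := by
  classical
  set L : H →L[ℝ] H × ℝ :=
    (ContinuousLinearMap.id ℝ H - Vn.subtypeL.comp (Submodule.orthogonalProjectionOnto Vn)).prod
      (innerSL ℝ x) with hL
  have hLapp : ∀ c : H, L c = (c - (Submodule.orthogonalProjectionOnto Vn c : H), inner (𝕜 := ℝ) x c) := by
    intro c; rfl
  set T : Set (H × ℝ) := L '' K with hT
  have hTcomp : IsCompact T := hKcomp.image L.continuous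
  have hTconv : Convex ℝ T := by
    have := hKconv.linear_image (L : H →ₗ[ℝ] H × ℝ)
    simpa using this
  set S : Set (H × ℝ) := ({(0 : H)} : Set H) ×ˢ Set.Ici β with hS
  have hSclosed : IsClosed S := isClosed_singleton.prod isClosed_Ici
  have hSconv : Convex ℝ S := (convex_singleton _).prod (convex_Ici _)
  have hdisj : Disjoint T S := by
    rw [Set.disjoint_left]
    rintro ⟨w, s⟩ ⟨c, hcK, hceq⟩ ⟨hw0, hs⟩
    rw [hLapp] at hceq
    have hw : c - (Submodule.orthogonalProjectionOnto Vn c : H) = 0 := by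
      have := congrArg Prod.fst hceq
      simpa using this.trans hw0
    have hcV : c ∈ Vn := by
      have h' : (Submodule.orthogonalProjectionOnto Vn c : H) = c := (sub_eq_zero.1 hw).symm
      exact Submodule.starProjection_eq_self_iff.1 h'
    have hs' : s = inner (𝕜 := ℝ) x c := (congrArg Prod.snd hceq).symm
    have h1 : inner (𝕜 := ℝ) c x ≤ α := hα c hcK hcV
    rw [real_inner_comm] at h1
    have h2 : s ≤ α := by rw [hs']; exact h1
    have : β ≤ α := le_trans hs h2
    linarith
  obtain ⟨f, u, v, hfT, huv, hfS⟩ :=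
    geometric_hahn_banach_compact_closed hTconv hTcomp hSconv hSclosed hdisj
  set τ : ℝ := f ((0 : H), (1 : ℝ)) with hτdef
  set g : H →L[ℝ] ℝ := f.comp (ContinuousLinearMap.inl ℝ H ℝ) with hg
  have hf_split : ∀ (w : H) (s : ℝ), f (w, s) = g w + s * τ := by
    intro w s
    have h1 : ((w, s) : H × ℝ) = (w, 0) + s • ((0 : H), (1 : ℝ)) := by
      simp [Prod.ext_iff]
    rw [h1, map_add, map_smul, smul_eq_mul]
    rfl
  have hfS' : ∀ s : ℝ, β ≤ s → v < s * τ := by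
    intro s hs
    have : v < f ((0 : H), s) := hfS _ ⟨rfl, hs⟩
    rwa [hf_split, map_zero, zero_add] at this
  have hτpos : 0 < τ := by
    rcases lt_trichotomy τ 0 with hneg | hzero | hpos
    · exfalso
      have h1 : v < max β (v / τ) * τ := hfS' _ (le_max_left _ _)
      have h2 : max β (v / τ) * τ ≤ (v / τ) * τ :=
        mul_le_mul_of_nonpos_right (le_max_right _ _) hneg.le
      rw [div_mul_cancel₀ _ hneg.ne] at h2
      linarith
    · exfalso
      have hv0 : v < 0 := by
        have := hfS' β le_rfl
        rwa [hzero, mul_zero] at this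
      have hc0T : L c0 ∈ T := ⟨c0, hc0K, rfl⟩
      have h1 : f (L c0) < u := hfT _ hc0T
      have hPc0 : (Submodule.orthogonalProjectionOnto Vn c0 : H) = c0 :=
        Submodule.starProjection_eq_self_iff.2 hc0V
      rw [hLapp, hPc0, sub_self, hf_split, map_zero, hzero, mul_zero, add_zero] at h1
      linarith
    · exact hpos
  set y : H := (InnerProductSpace.toDual ℝ H).symm g with hy
  have hyg : ∀ w : H, inner (𝕜 := ℝ) y w = g w := fun w =>
    InnerProductSpace.toDual_symm_apply
  set z : H := τ⁻¹ • y with hz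
  set w0 : H := z - (Submodule.orthogonalProjectionOnto Vn z : H) with hw0
  have hw0orth : w0 ∈ Vnᗮ := Submodule.sub_starProjection_mem_orthogonal z
  refine ⟨x + w0, ?_, ?_⟩
  · have h1 : (Submodule.orthogonalProjectionOnto Vn (x + w0) : H)
        = ((Submodule.orthogonalProjectionOnto Vn x : H)) + ((Submodule.orthogonalProjectionOnto Vn w0 : H)) := by
      rw [map_add]; rfl
    rw [h1, (show (Submodule.orthogonalProjectionOnto Vn x : H) = x from Submodule.starProjection_eq_self_iff.2 hx),
      Submodule.orthogonalProjectionOnto_apply_of_mem_orthogonal hw0orth]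
    simp
  · intro c hcK
    have hQc : c - (Submodule.orthogonalProjectionOnto Vn c : H) ∈ Vnᗮ :=
      Submodule.sub_starProjection_mem_orthogonal c
    have hcw0 : inner (𝕜 := ℝ) c w0
        = τ⁻¹ * g (c - (Submodule.orthogonalProjectionOnto Vn c : H)) := by
      have e1 : inner (𝕜 := ℝ) ((Submodule.orthogonalProjectionOnto Vn c : H)) w0 = 0 :=
        (Submodule.mem_orthogonal Vn w0).1 hw0orth _ (SetLike.coe_mem _)
      have e2 : inner (𝕜 := ℝ) (c - (Submodule.orthogonalProjectionOnto Vn c : H))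
          ((Submodule.orthogonalProjectionOnto Vn z : H)) = 0 :=
        (Submodule.mem_orthogonal' Vn _).1 hQc _ (SetLike.coe_mem _)
      have e3 : inner (𝕜 := ℝ) c w0
          = inner (𝕜 := ℝ) (c - (Submodule.orthogonalProjectionOnto Vn c : H)) w0 := by
        rw [inner_sub_left, e1, sub_zero]
      rw [e3, hw0, inner_sub_right, e2, sub_zero, hz, real_inner_smul_right,
        real_inner_comm, hyg]
    have hcT : L c ∈ T := ⟨c, hcK, rfl⟩
    have h1 : f (L c) < u := hfT _ hcT
    rw [hLapp, hf_split] at h1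
    have h2 : v < β * τ := hfS' β le_rfl
    have h3 : g (c - (Submodule.orthogonalProjectionOnto Vn c : H)) + inner (𝕜 := ℝ) x c * τ < β * τ := by
      linarith
    have h4 : inner (𝕜 := ℝ) c (x + w0)
        = inner (𝕜 := ℝ) c x + τ⁻¹ * g (c - (Submodule.orthogonalProjectionOnto Vn c : H)) := by
      rw [inner_add_right, hcw0]
    rw [h4, real_inner_comm]
    have h5 : g (c - (Submodule.orthogonalProjectionOnto Vn c : H)) < (β - inner (𝕜 := ℝ) x c) * τ := by
      nlinarith
    have h6 : τ⁻¹ * g (c - (Submodule.orthogonalProjectionOnto Vn c : H)) < β - inner (𝕜 := ℝ) x c := by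
      rw [inv_mul_eq_div]
      exact (div_lt_iff₀ hτpos).2 h5
    linarith

/-- Key separation lemma, empty-intersection case. -/
lemma aux_key_empty (Vn : Submodule ℝ H) (K : Set H) (hKcomp : IsCompact K)
    (hKconv : Convex ℝ K) (x : H) (hx : x ∈ Vn) (hKne : K.Nonempty)
    (hdisj : ∀ c ∈ K, c ∉ Vn) (r : ℝ) :
    ∃ x' : H, (Submodule.orthogonalProjectionOnto Vn x' : H) = x ∧
      ∀ c ∈ K, inner (𝕜 := ℝ) c x' ≤ r := by
  classical
  have hVclosed : IsClosed (Vn : Set H) := Submodule.closed_of_finiteDimensional Vn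
  have hdisj' : Disjoint K (Vn : Set H) :=
    Set.disjoint_left.2 fun c hcK hcV => hdisj c hcK hcV
  obtain ⟨f, u, v, hfK, huv, hfV⟩ :=
    geometric_hahn_banach_compact_closed hKconv hKcomp Vn.convex hVclosed hdisj'
  have hf0 : ∀ b ∈ Vn, f b = 0 := by
    intro b hb
    by_contra hne
    have h1 : v < f (((v - 1) / f b) • b) := hfV _ (Vn.smul_mem _ hb)
    rw [map_smul, smul_eq_mul, div_mul_cancel₀ _ hne] at h1
    linarith
  have hv0 : v < 0 := by
    have := hfV 0 Vn.zero_mem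
    rwa [map_zero] at this
  have hu0 : u < 0 := lt_trans huv hv0
  set y : H := (InnerProductSpace.toDual ℝ H).symm f with hy
  have hyf : ∀ w : H, inner (𝕜 := ℝ) y w = f w := fun w =>
    InnerProductSpace.toDual_symm_apply
  have hyorth : y ∈ Vnᗮ := by
    rw [Submodule.mem_orthogonal' Vn]
    intro b hb
    rw [hyf, hf0 b hb]
  have hcont : Continuous fun c : H => inner (𝕜 := ℝ) c x :=
    continuous_id.inner continuous_const
  obtain ⟨cM, hcM, hmax⟩ := hKcomp.exists_isMaxOn hKne hcont.continuousOn
  set M : ℝ := inner (𝕜 := ℝ) cM x with hM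
  set t : ℝ := max 0 ((r - M) / u) with ht
  have ht0 : 0 ≤ t := le_max_left _ _
  have htu : t * u ≤ r - M := by
    have h2 : t * u ≤ ((r - M) / u) * u :=
      mul_le_mul_of_nonpos_right (le_max_right _ _) hu0.le
    rwa [div_mul_cancel₀ _ hu0.ne] at h2
  refine ⟨x + t • y, ?_, ?_⟩
  · have h1 : (Submodule.orthogonalProjectionOnto Vn (x + t • y) : H)
        = ((Submodule.orthogonalProjectionOnto Vn x : H)) + t • ((Submodule.orthogonalProjectionOnto Vn y : H)) := by
      rw [map_add, map_smul]; rfl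
    rw [h1, (show (Submodule.orthogonalProjectionOnto Vn x : H) = x from Submodule.starProjection_eq_self_iff.2 hx),
      Submodule.orthogonalProjectionOnto_apply_of_mem_orthogonal hyorth]
    simp
  · intro c hcK
    have h1 : inner (𝕜 := ℝ) c (x + t • y)
        = inner (𝕜 := ℝ) c x + t * inner (𝕜 := ℝ) y c := by
      rw [inner_add_right, real_inner_smul_right, real_inner_comm c y]
    rw [h1, hyf]
    have h2 : inner (𝕜 := ℝ) c x ≤ M := hmax hcK
    have h3 : f c < u := hfK c hcK
    have h4 : t * f c ≤ t * u := mul_le_mul_of_nonneg_left h3.le ht0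
    linarith

end Aux

/-- If the sequence of convex sets `{C n ⊆ V n}` is
projection-compatible, then the support functions are intersection-compatible
(`h_{C (n+1)}` restricted to `V n` equals `h_{C n}`). Conversely, if `{C n}` is
intersection-compatible and each `C n` is compact, then the support functions are
projection-compatible: `inf { h_{C (n+1)} (x') | 𝒫_{V n} x' = x } = h_{C n} (x)`
for all `x ∈ V n`. -/
theorem support_function_compatibility
    {H : Type*} [NormedAddCommGroup H] [InnerProductSpace ℝ H] [FiniteDimensional ℝ H]
    (V : ℕ → Submodule ℝ H) (hV : ∀ n, V n ≤ V (n + 1))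
    (C : ℕ → Set H) (hCV : ∀ n, C n ⊆ (V n : Set H))
    (hconv : ∀ n, Convex ℝ (C n)) :
    ((∀ n, (fun x : H => (Submodule.orthogonalProjectionOnto (V n) x : H)) '' C (n + 1) = C n) →
      ∀ n, ∀ x ∈ V n, suppFn (C (n + 1)) x = suppFn (C n) x) ∧
    ((∀ n, C (n + 1) ∩ (V n : Set H) = C n) → (∀ n, IsCompact (C n)) →
      ∀ n, ∀ x ∈ V n,
        sInf (suppFn (C (n + 1)) '' {x' : H | (Submodule.orthogonalProjectionOnto (V n) x' : H) = x})
          = suppFn (C n) x) := by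
  constructor
  · -- projection-compatible sets → intersection-compatible support functions
    intro hP n x hx
    have hset : {r : ℝ | ∃ x' ∈ C (n + 1), r = inner (𝕜 := ℝ) x' x}
        = {r : ℝ | ∃ c ∈ C n, r = inner (𝕜 := ℝ) c x} := by
      ext r
      constructor
      · rintro ⟨x', hx', rfl⟩
        refine ⟨(Submodule.orthogonalProjectionOnto (V n) x' : H), ?_, ?_⟩
        · rw [← hP n]; exact ⟨x', hx', rfl⟩
        · rw [real_inner_comm, aux_inner_proj (V n) hx x', real_inner_comm]
      · rintro ⟨c, hc, rfl⟩
        rw [← hP n] at hc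
        obtain ⟨x', hx', hcx⟩ := hc
        refine ⟨x', hx', ?_⟩
        rw [← hcx, real_inner_comm, ← aux_inner_proj (V n) hx x', real_inner_comm]
    unfold suppFn
    rw [hset]
  · -- intersection-compatible sets + compactness → projection-compatible support functions
    intro hI hcomp n x hx
    have hCsub : C n ⊆ C (n + 1) := by
      rw [← hI n]; exact Set.inter_subset_left
    have hge : suppFn (C n) x ≤
        sInf (suppFn (C (n + 1)) '' {x' : H | (Submodule.orthogonalProjectionOnto (V n) x' : H) = x}) := by
      refine le_sInf ?_
      rintro b ⟨x', hx', rfl⟩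
      refine sSup_le ?_
      rintro r ⟨s, ⟨c, hc, rfl⟩, rfl⟩
      have hcV : c ∈ V n := hCV n hc
      have heq : inner (𝕜 := ℝ) c x = inner (𝕜 := ℝ) c x' := by
        rw [aux_inner_proj (V n) hcV x', hx']
      rw [heq]
      exact aux_le_suppFn (hCsub hc)
    rcases (C n).eq_empty_or_nonempty with hCe | hCne
    · -- C n empty
      have hsupbot : suppFn (C n) x = ⊥ := by
        unfold suppFn; rw [hCe]; simp
      rw [hsupbot]
      by_contra hne
      have hbot : (⊥ : EReal) < sInf (suppFn (C (n + 1)) ''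
          {x' : H | (Submodule.orthogonalProjectionOnto (V n) x' : H) = x}) := by
        rcases lt_or_eq_of_le (bot_le : (⊥ : EReal) ≤ _) with h | h
        · exact h
        · exact absurd h.symm hne
      obtain ⟨r, _, hr2⟩ := EReal.exists_between_coe_real hbot
      rcases (C (n + 1)).eq_empty_or_nonempty with hCe' | hCne'
      · have hxmem : suppFn (C (n + 1)) x ∈
            suppFn (C (n + 1)) '' {x' : H | (Submodule.orthogonalProjectionOnto (V n) x' : H) = x} :=
          ⟨x, Submodule.starProjection_eq_self_iff.2 hx, rfl⟩
        have hval : suppFn (C (n + 1)) x = ⊥ := by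
          unfold suppFn; rw [hCe']; simp
        have := sInf_le hxmem
        rw [hval] at this
        exact absurd (le_antisymm this bot_le) hne
      · have hdisj : ∀ c ∈ C (n + 1), c ∉ V n := by
          intro c hc hcV
          have : c ∈ C n := by rw [← hI n]; exact ⟨hc, hcV⟩
          rw [hCe] at this; exact this
        obtain ⟨x', hPx', hbound⟩ :=
          aux_key_empty (V n) (C (n + 1)) (hcomp (n + 1)) (hconv (n + 1)) x hx hCne' hdisj r
        have h1 : suppFn (C (n + 1)) x' ≤ (r : EReal) := aux_suppFn_le hbound
        have h2 : sInf (suppFn (C (n + 1)) ''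
            {x' : H | (Submodule.orthogonalProjectionOnto (V n) x' : H) = x}) ≤ (r : EReal) :=
          le_trans (sInf_le ⟨x', hPx', rfl⟩) h1
        exact absurd h2 (not_le.2 hr2)
    · -- C n nonempty
      have hcont : Continuous fun c : H => inner (𝕜 := ℝ) c x :=
        continuous_id.inner continuous_const
      obtain ⟨cM, hcM, hmax⟩ := (hcomp n).exists_isMaxOn hCne hcont.continuousOn
      set α : ℝ := inner (𝕜 := ℝ) cM x with hα
      have hsup_eq : suppFn (C n) x = (α : EReal) :=
        le_antisymm (aux_suppFn_le fun c hc => hmax hc) (aux_le_suppFn hcM)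
      refine le_antisymm ?_ hge
      rw [hsup_eq]
      by_contra hne
      have hlt : (α : EReal) < sInf (suppFn (C (n + 1)) ''
          {x' : H | (Submodule.orthogonalProjectionOnto (V n) x' : H) = x}) := not_le.1 hne
      obtain ⟨β, hβ1, hβ2⟩ := EReal.exists_between_coe_real hlt
      have hβα : α < β := EReal.coe_lt_coe_iff.1 hβ1
      have hαbound : ∀ c ∈ C (n + 1), c ∈ V n → inner (𝕜 := ℝ) c x ≤ α := by
        intro c hc hcV
        have : c ∈ C n := by rw [← hI n]; exact ⟨hc, hcV⟩
        exact hmax this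
      obtain ⟨x', hPx', hbound⟩ :=
        aux_key (V n) (C (n + 1)) (hcomp (n + 1)) (hconv (n + 1)) x hx
          (hCsub hcM) (hCV n hcM) α β hαbound hβα
      have h1 : suppFn (C (n + 1)) x' ≤ (β : EReal) := aux_suppFn_le hbound
      have h2 : sInf (suppFn (C (n + 1)) ''
          {x' : H | (Submodule.orthogonalProjectionOnto (V n) x' : H) = x}) ≤ (β : EReal) :=
        le_trans (sInf_le ⟨x', hPx', rfl⟩) h1
      exact absurd h2 (not_le.2 hβ2)
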